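/- Let Γ be a group. On the free ℤ-module ℤ⟨Γ⟩ with basis {b_x : x a finite word over Γ}, define a product ⊗ recursively by the fusion rules: b_x ⊗ b_y = Σ_{x=u·t, y=t̄·v} b_{u·v} + Σ_{x=u·t, y=t̄·v, u≠∅, v≠∅} b_{u∗v}, where u·v denotes concatenation and u∗v denotes fusion (multiplying the last letter of u with the first letter of v), and t̄ is the involution of t. Then the unique ring homomorphism F from the free noncommutative polynomial ring ℤ⟨X_g : g ∈ Γ⟩ to (ℤ⟨Γ⟩, +, ⊗) sending X_g to b_g is surjective. -/

import Mathlib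

/-- Involution on words: reverse and invert letters. -/
def wordInv {Γ : Type*} [Group Γ] (w : List Γ) : List Γ := (w.map (·⁻¹)).reverse

/-- Fusion of two words: multiply the last letter of `u` with the first letter of `v`. -/
def fuse {Γ : Type*} [Group Γ] (u v : List Γ) : List Γ :=
  match u.getLast?, v with
  | some a, b :: t => u.dropLast ++ (a * b) :: t
  | _, _ => u ++ v

open scoped Classical in
/-- The fusion product on basis elements:
`b_x ⊗ b_y = Σ_{x=u·t, y=t̄·v} b_{u·v} + Σ_{x=u·t, y=t̄·v, u≠∅, v≠∅} b_{u∗v}`. -/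
noncomputable def basisMul {Γ : Type*} [Group Γ] (x y : List Γ) : List Γ →₀ ℤ :=
  ∑ k ∈ Finset.range (min x.length y.length + 1),
    if wordInv (x.drop (x.length - k)) = y.take k then
      Finsupp.single (x.take (x.length - k) ++ y.drop k) 1 +
        (if k < x.length ∧ k < y.length then
          Finsupp.single (fuse (x.take (x.length - k)) (y.drop k)) 1 else 0)
    else 0

/-- The fusion product `⊗` on the free `ℤ`-module `ℤ⟨Γ⟩` on words over `Γ`,
extended bilinearly from the fusion rules. -/
noncomputable def fmul {Γ : Type*} [Group Γ] (α β : List Γ →₀ ℤ) : List Γ →₀ ℤ :=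
  α.sum fun x a => β.sum fun y b => (a * b) • basisMul x y

lemma fmul_single {Γ : Type*} [Group Γ] (x y : List Γ) :
    fmul (Finsupp.single x (1:ℤ)) (Finsupp.single y 1) = basisMul x y := by
  unfold fmul
  rw [Finsupp.sum_single_index, Finsupp.sum_single_index] <;> simp

open scoped Classical in
lemma basisMul_cons {Γ : Type*} [Group Γ] (g h : Γ) (t : List Γ) :
    basisMul [g] (h :: t) = Finsupp.single (g :: h :: t) 1 +
      Finsupp.single ((g * h) :: t) 1 +
      (if g⁻¹ = h then Finsupp.single t 1 else 0) := by
  unfold basisMul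
  rw [show min [g].length (h::t).length + 1 = 2 by simp [Nat.min_def]]
  rw [Finset.sum_range_succ, Finset.sum_range_one]
  simp [wordInv, fuse, add_assoc]

/-- The (unique) ring homomorphism `F` from the free noncommutative polynomial ring
`ℤ⟨X_g : g ∈ Γ⟩` to `(ℤ⟨Γ⟩, +, ⊗)` sending `X_g` to `b_g` is surjective. -/
theorem fusion_ringHom_surjective {Γ : Type*} [Group Γ]
    (F : FreeAlgebra ℤ Γ →+ (List Γ →₀ ℤ))
    (hmul : ∀ a b : FreeAlgebra ℤ Γ, F (a * b) = fmul (F a) (F b))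
    (hone : F 1 = Finsupp.single ([] : List Γ) 1)
    (hgen : ∀ g : Γ, F (FreeAlgebra.ι ℤ g) = Finsupp.single [g] 1) :
    Function.Surjective F := by
  classical
  have key : ∀ n : ℕ, ∀ w : List Γ, w.length ≤ n → ∃ p, F p = Finsupp.single w 1 := by
    intro n
    induction n with
    | zero =>
      intro w hw
      obtain rfl : w = [] := List.length_eq_zero_iff.mp (Nat.le_zero.mp hw)
      exact ⟨1, hone⟩
    | succ n ih =>
      intro w hw
      match w with
      | [] => exact ⟨1, hone⟩
      | [g] => exact ⟨FreeAlgebra.ι ℤ g, hgen g⟩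
      | g :: h :: t =>
        simp only [List.length_cons] at hw
        obtain ⟨p, hp⟩ := ih ((g * h) :: t) (by simp; omega)
        obtain ⟨q, hq⟩ := ih (h :: t) (by simp; omega)
        by_cases hc : g⁻¹ = h
        · obtain ⟨r, hr⟩ := ih t (by omega)
          refine ⟨FreeAlgebra.ι ℤ g * q - p - r, ?_⟩
          rw [map_sub, map_sub, hmul, hgen, hq, hp, hr, fmul_single, basisMul_cons,
            if_pos hc]
          abel
        · refine ⟨FreeAlgebra.ι ℤ g * q - p, ?_⟩
          rw [map_sub, hmul, hgen, hq, hp, fmul_single, basisMul_cons, if_neg hc]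
          abel
  intro α
  induction α using Finsupp.induction with
  | zero => exact ⟨0, map_zero F⟩
  | single_add a b f _ _ ihf =>
    obtain ⟨p, hp⟩ := key a.length a le_rfl
    obtain ⟨q, hq⟩ := ihf
    refine ⟨b • p + q, ?_⟩
    rw [map_add, map_zsmul, hp, hq, Finsupp.smul_single, smul_eq_mul, mul_one]
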